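/- (Packing bound) Let q be a prime power and let n, k, δ be integers with 0 ≤ δ ≤ k ≤ n. Then A_q(n, 2δ+2, k) ≤ [n choose k−δ]_q / [k choose k−δ]_q. -/

import Mathlib

open Module

/-- The Gaussian binomial coefficient `[n choose k]_q`, as a real number:
`∏_{i=0}^{k-1} (q^{n-i}-1)/(q^{k-i}-1)`. -/
noncomputable def gaussBinom (q n k : ℕ) : ℝ :=
  ∏ i ∈ Finset.range k, ((q : ℝ) ^ (n - i) - 1) / ((q : ℝ) ^ (k - i) - 1)

/-- `C` is a constant dimension code in the Grassmannian `G_q(n,k)` with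
minimum subspace distance at least `d`: all its elements are `k`-dimensional
subspaces of `F^n`, and `d_S(U,V) = 2k - 2 dim(U ⊓ V) ≥ d` for distinct `U,V ∈ C`. -/
def IsGrassmannCode (F : Type) [Field F] (n k d : ℕ)
    (C : Finset (Submodule F (Fin n → F))) : Prop :=
  (∀ U ∈ C, finrank F ↥U = k) ∧
  ∀ U ∈ C, ∀ V ∈ C, U ≠ V → d ≤ 2 * k - 2 * finrank F ↥(U ⊓ V)

/-- `A_q(n,d,k)`: the maximum size of an `(n,M,d,k)_q` code. -/
noncomputable def maxCodeSize (F : Type) [Field F] (n d k : ℕ) : ℕ :=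
  sSup {M | ∃ C : Finset (Submodule F (Fin n → F)), IsGrassmannCode F n k d C ∧ C.card = M}

section CountAux

variable {K V : Type*} [Field K] [Fintype K] [AddCommGroup V] [Module K V] [Finite V]

/-- The number of `j`-dimensional subspaces of `V`, times the number of bases of a
`j`-dimensional space, equals the number of linearly independent `j`-tuples in `V`. -/
lemma card_subspaces_mul (j : ℕ) (hj : j ≤ finrank K V) :
    Nat.card {W : Submodule K V // finrank K ↥W = j} *
      ∏ i : Fin j, (Fintype.card K ^ j - Fintype.card K ^ i.val) =
      ∏ i : Fin j, (Fintype.card K ^ finrank K V - Fintype.card K ^ i.val) := by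
  classical
  haveI : Finite (Submodule K V) :=
    Finite.of_injective (fun W : Submodule K V => (W : Set V)) SetLike.coe_injective
  haveI := Fintype.ofFinite V
  haveI := Fintype.ofFinite (Submodule K V)
  set S := {W : Submodule K V // finrank K ↥W = j} with hS
  haveI : Fintype S := Fintype.ofFinite S
  set L := {s : Fin j → V // LinearIndependent K s} with hL
  haveI : Fintype L := Fintype.ofFinite L
  set φ : L → S := fun s => ⟨Submodule.span K (Set.range s.1), by
    rw [finrank_span_eq_card s.2, Fintype.card_fin]⟩ with hφ
  have hfiber : ∀ W : S, Nat.card {s : L // φ s = W} =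
      ∏ i : Fin j, (Fintype.card K ^ j - Fintype.card K ^ i.val) := by
    intro W
    have e : {s : L // φ s = W} ≃ {t : Fin j → ↥W.1 // LinearIndependent K t} :=
      { toFun := fun s => ⟨fun i => ⟨s.1.1 i, by
          have hsp : Submodule.span K (Set.range s.1.1) = W.1 := congrArg Subtype.val s.2
          exact hsp ▸ Submodule.subset_span (Set.mem_range_self i)⟩, by
          exact ((W.1).subtype.linearIndependent_iff (Submodule.ker_subtype _)).mp s.1.2⟩
        invFun := fun t => ⟨⟨fun i => ((t.1 i : V)), by
          exact ((W.1).subtype.linearIndependent_iff (Submodule.ker_subtype _)).mpr t.2⟩, by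
          apply Subtype.ext
          show Submodule.span K (Set.range fun i => ((t.1 i : V))) = (W.1 : Submodule K V)
          refine Submodule.eq_of_le_of_finrank_eq (Submodule.span_le.2 ?_) ?_
          · rintro x ⟨i, rfl⟩; exact (t.1 i).2
          · have ht : LinearIndependent K fun i => ((t.1 i : V)) :=
              ((W.1).subtype.linearIndependent_iff (Submodule.ker_subtype _)).mpr t.2
            rw [finrank_span_eq_card ht, Fintype.card_fin, W.2]⟩
        left_inv := fun s => rfl
        right_inv := fun t => rfl }
    rw [Nat.card_congr e, card_linearIndependent (by rw [W.2]), W.2]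
  have key : Nat.card L = Nat.card S *
      ∏ i : Fin j, (Fintype.card K ^ j - Fintype.card K ^ i.val) := by
    rw [Nat.card_eq_fintype_card, Nat.card_eq_fintype_card]
    calc Fintype.card L = Fintype.card (Σ W : S, {s : L // φ s = W}) :=
          Fintype.card_congr (Equiv.sigmaFiberEquiv φ).symm
      _ = ∑ W : S, Fintype.card {s : L // φ s = W} := Fintype.card_sigma
      _ = ∑ _W : S, ∏ i : Fin j, (Fintype.card K ^ j - Fintype.card K ^ i.val) :=
          Finset.sum_congr rfl fun W _ => by rw [← Nat.card_eq_fintype_card, hfiber W]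
      _ = Fintype.card S * ∏ i : Fin j, (Fintype.card K ^ j - Fintype.card K ^ i.val) := by
          rw [Finset.sum_const, smul_eq_mul, Finset.card_univ]
  have h1 : Nat.card L = ∏ i : Fin j, (Fintype.card K ^ finrank K V - Fintype.card K ^ i.val) :=
    card_linearIndependent hj
  rw [← key, h1]

end CountAux


/-- Transfer: subspaces of `V` contained in `U` correspond to subspaces of `U`. -/
lemma card_sub_le {K V : Type*} [Field K] [AddCommGroup V] [Module K V]
    (U : Submodule K V) (j : ℕ) :
    Nat.card {W : Submodule K V // finrank K ↥W = j ∧ W ≤ U} =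
      Nat.card {W : Submodule K ↥U // finrank K ↥W = j} := by
  refine (Nat.card_congr ?_).symm
  have e1 : {W : Submodule K ↥U // finrank K ↥W = j} ≃
      {x : {W : Submodule K V // W ≤ U} // finrank K ↥(x.1) = j} :=
    Equiv.subtypeEquiv (Submodule.MapSubtype.orderIso U).toEquiv (fun W' => by
      rw [show finrank K ↥(((Submodule.MapSubtype.orderIso U).toEquiv W' :
            {W : Submodule K V // W ≤ U}) : Submodule K V) = finrank K ↥W' from
          Submodule.finrank_map_subtype_eq U W'])
  exact e1.trans ((Equiv.subtypeSubtypeEquivSubtypeInter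
      (fun W : Submodule K V => W ≤ U) (fun W => finrank K ↥W = j)).trans
    (Equiv.subtypeEquivRight fun W => and_comm))


lemma code_bound (F : Type) [Field F] [Fintype F] (n k δ : ℕ) (hδk : δ ≤ k) (hkn : k ≤ n)
    (C : Finset (Submodule F (Fin n → F))) (hC : IsGrassmannCode F n k (2 * δ + 2) C) :
    C.card * ∏ i : Fin (k - δ), (Fintype.card F ^ k - Fintype.card F ^ i.val) ≤
      ∏ i : Fin (k - δ), (Fintype.card F ^ n - Fintype.card F ^ i.val) := by
  classical
  set q := Fintype.card F with hq
  set j := k - δ with hjdef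
  haveI : Finite (Submodule F (Fin n → F)) :=
    Finite.of_injective (fun W : Submodule F (Fin n → F) => (W : Set (Fin n → F)))
      SetLike.coe_injective
  haveI := Fintype.ofFinite (Submodule F (Fin n → F))
  have hfr : finrank F (Fin n → F) = n := by
    rw [Module.finrank_fintype_fun_eq_card, Fintype.card_fin]
  set Sf : Finset (Submodule F (Fin n → F)) :=
    Finset.univ.filter (fun W => finrank F ↥W = j) with hSf
  set D := ∏ i : Fin j, (q ^ j - q ^ i.val) with hD
  -- total count
  have hScard : Sf.card * D = ∏ i : Fin j, (q ^ n - q ^ i.val) := by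
    have h1 : Sf.card = Nat.card {W : Submodule F (Fin n → F) // finrank F ↥W = j} := by
      rw [Nat.card_eq_fintype_card, Fintype.card_subtype]
    have h2 := card_subspaces_mul (K := F) (V := Fin n → F) j
      (by rw [hfr]; omega)
    rw [hfr] at h2
    rw [h1]; exact h2
  -- per-codeword count
  have hUcard : ∀ U ∈ C, (Sf.filter (· ≤ U)).card * D = ∏ i : Fin j, (q ^ k - q ^ i.val) := by
    intro U hUC
    have hfU : finrank F ↥U = k := hC.1 U hUC
    have h1 : (Sf.filter (· ≤ U)).card =
        Nat.card {W : Submodule F (Fin n → F) // finrank F ↥W = j ∧ W ≤ U} := by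
      rw [hSf, Finset.filter_filter, Nat.card_eq_fintype_card, Fintype.card_subtype]
    have h2 := card_subspaces_mul (K := F) (V := ↥U) j (by rw [hfU]; omega)
    rw [hfU] at h2
    rw [h1, card_sub_le U j]; exact h2
  -- disjointness
  have hdisj : ∀ U ∈ C, ∀ V' ∈ C, U ≠ V' →
      Disjoint (Sf.filter (· ≤ U)) (Sf.filter (· ≤ V')) := by
    intro U hU V' hV' hne
    rw [Finset.disjoint_left]
    intro W hWU hWV
    simp only [hSf, Finset.mem_filter, Finset.mem_univ, true_and] at hWU hWV
    have hWle : W ≤ U ⊓ V' := le_inf hWU.2 hWV.2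
    have hjle : j ≤ finrank F ↥(U ⊓ V') := by
      rw [← hWU.1]; exact Submodule.finrank_mono hWle
    have hd := hC.2 U hU V' hV' hne
    omega
  have hsum : ∑ U ∈ C, (Sf.filter (· ≤ U)).card ≤ Sf.card := by
    rw [← Finset.card_biUnion hdisj]
    exact Finset.card_le_card (Finset.biUnion_subset.2 fun U _ => Finset.filter_subset _ _)
  calc C.card * ∏ i : Fin j, (q ^ k - q ^ i.val)
      = ∑ _U ∈ C, ∏ i : Fin j, (q ^ k - q ^ i.val) := by
        rw [Finset.sum_const, smul_eq_mul]
    _ = ∑ U ∈ C, (Sf.filter (· ≤ U)).card * D :=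
        Finset.sum_congr rfl fun U hU => (hUcard U hU).symm
    _ = (∑ U ∈ C, (Sf.filter (· ≤ U)).card) * D := by rw [Finset.sum_mul]
    _ ≤ Sf.card * D := Nat.mul_le_mul_right _ hsum
    _ = ∏ i : Fin j, (q ^ n - q ^ i.val) := hScard

/-- **Packing bound.** `A_q(n,2δ+2,k) ≤ [n choose k-δ]_q / [k choose k-δ]_q`. -/
theorem packing_bound (F : Type) [Field F] [Fintype F] (n k δ : ℕ)
    (hδk : δ ≤ k) (hkn : k ≤ n) :
    (maxCodeSize F n (2 * δ + 2) k : ℝ) ≤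
      gaussBinom (Fintype.card F) n (k - δ) / gaussBinom (Fintype.card F) k (k - δ) := by
  classical
  set q := Fintype.card F with hq
  set j := k - δ with hjdef
  have hq2 : 1 < q := Fintype.one_lt_card
  have hq1 : (1 : ℝ) < (q : ℝ) := by exact_mod_cast hq2
  -- the auxiliary real products
  set G : ℕ → ℝ := fun m => ∏ i ∈ Finset.range j, ((q : ℝ) ^ (m - i) - 1) with hG
  have hGpos : ∀ m, j ≤ m → 0 < G m := by
    intro m hm
    refine Finset.prod_pos fun i hi => ?_
    rw [Finset.mem_range] at hi
    have h1 : (1 : ℝ) < (q : ℝ) ^ (m - i) := one_lt_pow₀ hq1 (by omega)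
    linarith
  have hgB : ∀ m, gaussBinom q m j = G m / G j := by
    intro m; rw [gaussBinom, Finset.prod_div_distrib]
  have hcast : ∀ m, j ≤ m → ((∏ i : Fin j, (q ^ m - q ^ i.val) : ℕ) : ℝ) =
      (∏ i ∈ Finset.range j, (q : ℝ) ^ i) * G m := by
    intro m hm
    rw [Nat.cast_prod, Fin.prod_univ_eq_prod_range (fun i => ((q ^ m - q ^ i : ℕ) : ℝ)) j, hG,
      ← Finset.prod_mul_distrib]
    refine Finset.prod_congr rfl fun i hi => ?_
    rw [Finset.mem_range] at hi
    have him : i ≤ m := by omega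
    have hpow : q ^ i ≤ q ^ m := Nat.pow_le_pow_right (by omega) him
    rw [Nat.cast_sub hpow, Nat.cast_pow, Nat.cast_pow, mul_sub, mul_one, ← pow_add,
      Nat.add_sub_cancel' him]
  -- the set of achievable code sizes
  have h0 : 0 ∈ {M | ∃ C : Finset (Submodule F (Fin n → F)),
      IsGrassmannCode F n k (2 * δ + 2) C ∧ C.card = M} :=
    ⟨∅, ⟨fun U hU => absurd hU (Finset.notMem_empty U),
      fun U hU => absurd hU (Finset.notMem_empty U)⟩, Finset.card_empty⟩
  have hDpos : 0 < ∏ i : Fin j, (q ^ k - q ^ i.val) := by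
    refine Finset.prod_pos fun i _ => ?_
    have hik : (i : ℕ) < k := by omega
    have := Nat.pow_lt_pow_right hq2 hik
    omega
  have hbound : ∀ M ∈ {M | ∃ C : Finset (Submodule F (Fin n → F)),
      IsGrassmannCode F n k (2 * δ + 2) C ∧ C.card = M},
      M ≤ ∏ i : Fin j, (q ^ n - q ^ i.val) := by
    rintro M ⟨C, hC, rfl⟩
    have hb := code_bound F n k δ hδk hkn C hC
    calc C.card ≤ C.card * ∏ i : Fin j, (q ^ k - q ^ i.val) :=
          Nat.le_mul_of_pos_right _ hDpos
      _ ≤ _ := hb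
  have hmem : maxCodeSize F n (2 * δ + 2) k ∈ {M | ∃ C : Finset (Submodule F (Fin n → F)),
      IsGrassmannCode F n k (2 * δ + 2) C ∧ C.card = M} := by
    rw [maxCodeSize]
    exact Nat.sSup_mem ⟨0, h0⟩ ⟨_, hbound⟩
  obtain ⟨C, hC, hCc⟩ := hmem
  rw [← hCc]
  have hb := code_bound F n k δ hδk hkn C hC
  have hb' : (C.card : ℝ) * ((∏ i : Fin j, (q ^ k - q ^ i.val) : ℕ) : ℝ) ≤
      ((∏ i : Fin j, (q ^ n - q ^ i.val) : ℕ) : ℝ) := by exact_mod_cast hb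
  rw [hcast k (by omega), hcast n (by omega)] at hb'
  set A := ∏ i ∈ Finset.range j, (q : ℝ) ^ i with hA
  have hApos : 0 < A := Finset.prod_pos fun i _ => pow_pos (by linarith) i
  have hGk := hGpos k (by omega)
  have hGn := hGpos n (by omega)
  have hGj := hGpos j le_rfl
  rw [hgB, hgB]
  have hratio : G n / G j / (G k / G j) = G n / G k := by
    field_simp
  rw [hratio, le_div_iff₀ hGk]
  have hre : (C.card : ℝ) * (A * G k) = A * ((C.card : ℝ) * G k) := by ring
  rw [hre] at hb'
  exact le_of_mul_le_mul_left hb' hApos
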